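/- Consider M queues with q_m(t+1) = q_m(t) + a_m(t) − μ + u_m(t), u_m(t) ≥ 0, 0 ≤ u_m(t) ≤ μ, where in each slot an arrival batch a(t) of mean λ and a(t) ≤ A a.s. is routed entirely to the shorter of two uniformly random distinct queues (power-of-two-choices). Let q_max, q_min denote the largest and smallest coordinates of q(t). Then the conditional expected routed workload satisfies E[Σ_m q_m(t)a_m(t) | q(t) = q] ≤ (λ/M)·Σ_m q_m − (λ/(2·C(M,2)))·(q_max − q_min), where C(M,2) = M(M−1)/2. -/

import Mathlib

/-- Power-of-two-choices drift estimate: averaging over the `C(M,2)` equally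
likely pairs, the conditional expected routed workload
`E[Σ_m q_m a_m | q] = (λ / C(M,2)) Σ_{i<j} min(q_i, q_j)` satisfies
`≤ (λ/M) Σ_m q_m − (λ/(2 C(M,2))) (q_max − q_min)`. -/
theorem power_of_two_choices_routing_bound
    (M : ℕ) (hM : 2 ≤ M) (lam : ℝ) (hlam : 0 ≤ lam)
    (q : Fin M → ℝ) (hq : ∀ m, 0 ≤ q m) :
    haveI : Nonempty (Fin M) := Fin.pos_iff_nonempty.mp (by omega)
    (1 / ((M * (M - 1) : ℝ) / 2)) *
        ∑ p ∈ Finset.univ.filter (fun p : Fin M × Fin M => p.1 < p.2),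
          lam * min (q p.1) (q p.2) ≤
      (lam / M) * ∑ m, q m -
        (lam / (2 * ((M * (M - 1) : ℝ) / 2))) *
          (Finset.univ.sup' Finset.univ_nonempty q -
            Finset.univ.inf' Finset.univ_nonempty q) := by
  haveI hne : Nonempty (Fin M) := Fin.pos_iff_nonempty.mp (by omega)
  have hM2 : (2:ℝ) ≤ (M:ℝ) := by exact_mod_cast hM
  have hM1 : (1:ℝ) ≤ (M:ℝ) - 1 := by linarith
  set S := Finset.univ.filter (fun p : Fin M × Fin M => p.1 < p.2) with hS
  set qmax := Finset.univ.sup' Finset.univ_nonempty q with hqmax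
  set qmin := Finset.univ.inf' Finset.univ_nonempty q with hqmin
  -- sum identity: ∑_{i<j} (q i + q j) = (M-1) ∑ q
  have hsumid : ∑ p ∈ S, (q p.1 + q p.2) = ((M:ℝ) - 1) * ∑ m, q m := by
    have hT : ∑ p ∈ Finset.univ.filter (fun p : Fin M × Fin M => p.1 ≠ p.2),
        (q p.1 + q p.2) = 2 * (((M:ℝ) - 1) * ∑ m, q m) := by
      rw [Finset.sum_filter, Fintype.sum_prod_type]
      have h1 : ∀ i : Fin M, ∑ j : Fin M, (if i ≠ j then q i + q j else 0)
          = ((M:ℝ) - 1) * q i + (∑ m, q m) - q i := by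
        intro i
        have h2 : ∀ j : Fin M, (if i ≠ j then q i + q j else 0)
            = q i + q j - (if i = j then q i + q j else 0) := by
          intro j
          by_cases h : i = j <;> simp [h]
        rw [Finset.sum_congr rfl (fun j _ => h2 j)]
        rw [Finset.sum_sub_distrib, Finset.sum_add_distrib, Finset.sum_const,
          Finset.sum_ite_eq Finset.univ i (fun j => q i + q j)]
        simp [Finset.card_univ]
        ring
      rw [Finset.sum_congr rfl (fun i _ => h1 i)]
      rw [Finset.sum_sub_distrib, Finset.sum_add_distrib, ← Finset.mul_sum,
        Finset.sum_const, Finset.card_univ]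
      simp
      ring
    have hsplit : ∑ p ∈ Finset.univ.filter (fun p : Fin M × Fin M => p.1 ≠ p.2),
        (q p.1 + q p.2) = (∑ p ∈ S, (q p.1 + q p.2)) +
          ∑ p ∈ Finset.univ.filter (fun p : Fin M × Fin M => p.2 < p.1),
            (q p.1 + q p.2) := by
      rw [hS, Finset.sum_filter, Finset.sum_filter, Finset.sum_filter,
        ← Finset.sum_add_distrib]
      refine Finset.sum_congr rfl (fun p _ => ?_)
      rcases lt_trichotomy p.1 p.2 with h | h | h
      · simp [h, ne_of_lt h, not_lt_of_gt h]
      · simp [h]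
      · simp [h, (ne_of_lt h).symm, not_lt_of_gt h]
    have hswap : ∑ p ∈ Finset.univ.filter (fun p : Fin M × Fin M => p.2 < p.1),
        (q p.1 + q p.2) = ∑ p ∈ S, (q p.1 + q p.2) := by
      refine Finset.sum_nbij' (fun p => Prod.swap p) (fun p => Prod.swap p) ?_ ?_ ?_ ?_ ?_
      · intro p hp
        simp only [Finset.mem_filter, Finset.mem_univ, true_and] at hp
        simp only [hS, Finset.mem_filter, Finset.mem_univ, true_and, Prod.fst_swap,
          Prod.snd_swap]
        exact hp
      · intro p hp
        simp only [hS, Finset.mem_filter, Finset.mem_univ, true_and] at hp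
        simp only [Finset.mem_filter, Finset.mem_univ, true_and, Prod.fst_swap, Prod.snd_swap]
        exact hp
      · intro p _; simp
      · intro p _; simp
      · intro p _; simp [add_comm]
    linarith [hT, hsplit, hswap]
  -- key estimate
  have key : ∑ p ∈ S, min (q p.1) (q p.2)
      ≤ ((M:ℝ) - 1) / 2 * (∑ m, q m) - (qmax - qmin) / 2 := by
    obtain ⟨i0, _, hi0⟩ := Finset.exists_mem_eq_inf' (Finset.univ_nonempty (α := Fin M)) q
    obtain ⟨j0, _, hj0⟩ := Finset.exists_mem_eq_sup' (Finset.univ_nonempty (α := Fin M)) q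
    have hle : qmin ≤ qmax :=
      (Finset.inf'_le q (Finset.mem_univ j0)).trans (Finset.le_sup' q (Finset.mem_univ j0))
    rcases eq_or_lt_of_le hle with heq | hlt
    · have h1 : ∑ p ∈ S, min (q p.1) (q p.2) ≤ ∑ p ∈ S, (q p.1 + q p.2) / 2 := by
        refine Finset.sum_le_sum (fun p _ => ?_)
        rcases le_total (q p.1) (q p.2) with h | h
        · rw [min_eq_left h]; linarith
        · rw [min_eq_right h]; linarith
      rw [← Finset.sum_div, hsumid] at h1
      linarith [h1, heq]
    · have hij : i0 ≠ j0 := by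
        intro h; rw [hqmin, hqmax, hi0, hj0, h] at hlt; exact lt_irrefl _ hlt
      set p0 : Fin M × Fin M := if h : i0 < j0 then (i0, j0) else (j0, i0) with hp0
      have hp0S : p0 ∈ S := by
        rw [hS, Finset.mem_filter]
        refine ⟨Finset.mem_univ _, ?_⟩
        rw [hp0]
        rcases lt_or_gt_of_ne hij with h | h
        · simp [h]
        · simp [h, not_lt_of_gt h]
      have hp0min : min (q p0.1) (q p0.2) = (q p0.1 + q p0.2) / 2 - (qmax - qmin) / 2 := by
        have hv : (q p0.1 = qmin ∧ q p0.2 = qmax) ∨ (q p0.1 = qmax ∧ q p0.2 = qmin) := by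
          rw [hp0]
          by_cases h : i0 < j0
          · left; simp [h, hqmin, hqmax, hi0, hj0]
          · right; simp [h, hqmin, hqmax, hi0, hj0]
        rcases hv with ⟨h1, h2⟩ | ⟨h1, h2⟩
        · rw [h1, h2, min_eq_left hle]; ring
        · rw [h1, h2, min_eq_right hle]; ring
      have h1 : ∑ p ∈ S, min (q p.1) (q p.2)
          ≤ ∑ p ∈ S, ((q p.1 + q p.2) / 2 - if p = p0 then (qmax - qmin) / 2 else 0) := by
        refine Finset.sum_le_sum (fun p _ => ?_)
        by_cases h : p = p0
        · subst h; simp [hp0min]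
        · simp only [h, if_false]
          rcases le_total (q p.1) (q p.2) with hh | hh
          · rw [min_eq_left hh]; linarith
          · rw [min_eq_right hh]; linarith
      rw [Finset.sum_sub_distrib, Finset.sum_ite_eq' S p0 (fun _ => (qmax - qmin) / 2),
        if_pos hp0S, ← Finset.sum_div, hsumid] at h1
      linarith [h1]
  -- final algebra
  have hMne : (M:ℝ) ≠ 0 := by linarith
  have hM1ne : (M:ℝ) - 1 ≠ 0 := by linarith
  have hC : (0:ℝ) < (M * (M - 1) : ℝ) / 2 := by nlinarith
  have hlhs : ∑ p ∈ S, lam * min (q p.1) (q p.2)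
      = lam * ∑ p ∈ S, min (q p.1) (q p.2) := by rw [Finset.mul_sum]
  rw [hlhs]
  have h1 : (1 / ((M * (M - 1) : ℝ) / 2)) * (lam * ∑ p ∈ S, min (q p.1) (q p.2))
      ≤ (1 / ((M * (M - 1) : ℝ) / 2)) *
        (lam * (((M:ℝ) - 1) / 2 * (∑ m, q m) - (qmax - qmin) / 2)) := by
    apply mul_le_mul_of_nonneg_left (mul_le_mul_of_nonneg_left key hlam)
    positivity
  refine h1.trans_eq ?_
  field_simp
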